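/- Assume hypothesis (H1) and the family setup below. Then there exists B > 0 such that ∫_ε^{1/ε} η_ε(x)·e^{−2Q(x)} dx ≥ B for every ε ∈ (0,1/2). -/

import Mathlib

open MeasureTheory intervalIntegral Filter

set_option maxHeartbeats 2000000 in
theorem stmt_6 (q q' Q W : ℝ → ℝ)
    (hq : ∀ x ∈ Set.Ioi (0:ℝ), HasDerivAt q (q' x) x)
    (hq'cont : ContinuousOn q' (Set.Ioi 0))
    (hQ : ∀ x, Q x = ∫ y in (1:ℝ)..x, q y)
    (hWdef : ∀ x ∈ Set.Ioi (0:ℝ), W x = q x ^ 2 - q' x)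
    -- Hypothesis (H1)
    (C : ℝ) (hC : 0 < C) (hWlb : ∀ x ∈ Set.Ioi (0:ℝ), -C ≤ W x)
    (hWtop : Tendsto W atTop atTop)
    -- Family setup
    (Λ : ℝ) (lam : ℝ → ℝ) (η η' η'' : ℝ → ℝ → ℝ)
    (hlam : ∀ ε ∈ Set.Ioo (0:ℝ) (1/2), lam ε ≤ Λ)
    (hη' : ∀ ε ∈ Set.Ioo (0:ℝ) (1/2), ∀ x ∈ Set.Icc ε (1/ε),
      HasDerivAt (η ε) (η' ε x) x)
    (hη'' : ∀ ε ∈ Set.Ioo (0:ℝ) (1/2), ∀ x ∈ Set.Icc ε (1/ε),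
      HasDerivAt (η' ε) (η'' ε x) x)
    (hη''cont : ∀ ε ∈ Set.Ioo (0:ℝ) (1/2), ContinuousOn (η'' ε) (Set.Icc ε (1/ε)))
    (hpos : ∀ ε ∈ Set.Ioo (0:ℝ) (1/2), ∀ x ∈ Set.Ioo ε (1/ε), 0 < η ε x)
    (hbd : ∀ ε ∈ Set.Ioo (0:ℝ) (1/2), η ε ε = 0 ∧ η ε (1/ε) = 0)
    (hode : ∀ ε ∈ Set.Ioo (0:ℝ) (1/2), ∀ x ∈ Set.Icc ε (1/ε),
      (1/2) * η'' ε x - q x * η' ε x = -(lam ε) * η ε x)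
    (hnorm : ∀ ε ∈ Set.Ioo (0:ℝ) (1/2),
      (∫ x in ε..(1/ε), (η ε x) ^ 2 * Real.exp (-2 * Q x)) = 1) :
    ∃ B > 0, ∀ ε ∈ Set.Ioo (0:ℝ) (1/2),
      B ≤ ∫ x in ε..(1/ε), η ε x * Real.exp (-2 * Q x) := by
  -- continuity of q and Q on (0,∞)
  have hqcont : ContinuousOn q (Set.Ioi 0) := fun x hx =>
    (hq x hx).continuousAt.continuousWithinAt
  have hQd : ∀ x ∈ Set.Ioi (0:ℝ), HasDerivAt Q (q x) x := by
    intro x hx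
    have hx0 : (0:ℝ) < x := hx
    have hint : IntervalIntegrable q volume 1 x := by
      apply (hqcont.mono _).intervalIntegrable
      intro y hy
      rcases le_total 1 x with h | h
      · rw [Set.uIcc_of_le h] at hy; exact lt_of_lt_of_le one_pos hy.1
      · rw [Set.uIcc_of_ge h] at hy; exact lt_of_lt_of_le hx0 hy.1
    have hmeas : StronglyMeasurableAtFilter q (nhds x) :=
      hqcont.stronglyMeasurableAtFilter isOpen_Ioi x hx
    have h := intervalIntegral.integral_hasDerivAt_right hint hmeas
      (hqcont.continuousAt (isOpen_Ioi.mem_nhds hx))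
    have hfun : Q = fun u => ∫ y in (1:ℝ)..u, q y := funext hQ
    rw [hfun]; exact h
  have hQcont : ContinuousOn Q (Set.Ioi 0) := fun x hx =>
    (hQd x hx).continuousAt.continuousWithinAt
  -- global constants
  set K' : ℝ := max (2*Λ + C) 1 with hK'def
  have hK'1 : (1:ℝ) ≤ K' := le_max_right _ _
  have hK'0 : (0:ℝ) < K' := lt_of_lt_of_le one_pos hK'1
  set s : ℝ := Real.sqrt K' with hsdef
  have hs0 : 0 < s := Real.sqrt_pos.2 hK'0
  have hs2 : s^2 = K' := Real.sq_sqrt hK'0.le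
  have hs1 : 1 ≤ s := by
    rw [hsdef, show (1:ℝ) = Real.sqrt 1 by simp]
    exact Real.sqrt_le_sqrt hK'1
  set S2 : ℝ := 2 * s with hS2def
  have hS20 : 0 < S2 := by positivity
  have hS2two : 2 ≤ S2 := by rw [hS2def]; linarith
  set a : ℝ := 1 / (8 * S2) with hadef
  have ha0 : 0 < a := by positivity
  have haS : a * S2 = 1/8 := by rw [hadef]; field_simp
  have hahalf : a ≤ 1/2 := by
    rw [hadef, div_le_div_iff₀ (by positivity) (by norm_num)]; linarith
  -- threshold point for W
  obtain ⟨b0, hb0⟩ := (hWtop.eventually_ge_atTop (8*K' - C)).exists_forall_of_atTop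
  set b : ℝ := max b0 2 with hbdef
  have hb2 : (2:ℝ) ≤ b := le_max_right _ _
  have hab : a ≤ b := le_trans (by linarith) hb2
  have hbW : ∀ x, b ≤ x → 8*K' - C ≤ W x := fun x hx => hb0 x (le_trans (le_max_left _ _) hx)
  -- minimum of exp(-Q) on [a,b]
  have hcontE : ContinuousOn (fun x => Real.exp (-Q x)) (Set.Icc a b) := by
    apply (Real.continuous_exp.comp_continuousOn (hQcont.mono _).neg)
    intro y hy; exact lt_of_lt_of_le ha0 hy.1
  obtain ⟨x₀, hx₀mem, hx₀min⟩ := isCompact_Icc.exists_isMinOn (Set.nonempty_Icc.2 hab) hcontE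
  set c : ℝ := Real.exp (-Q x₀) with hcdef
  have hc0 : 0 < c := Real.exp_pos _
  have hcmin : ∀ x ∈ Set.Icc a b, c ≤ Real.exp (-Q x) := fun x hx => hx₀min hx
  -- the uniform constant
  have hsS2 : 0 < Real.sqrt S2 := Real.sqrt_pos.2 hS20
  refine ⟨c / (2 * Real.sqrt S2), by positivity, ?_⟩
  intro ε hε
  set L : ℝ := 1/ε with hLdef
  have hε0 : 0 < ε := hε.1
  have hεh : ε < 1/2 := hε.2
  have hL2 : 2 < L := by
    rw [hLdef, lt_div_iff₀ hε0]; linarith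
  have hεL : ε ≤ L := by linarith
  have hsub : Set.Icc ε L ⊆ Set.Ioi 0 := fun y hy => lt_of_lt_of_le hε0 hy.1
  have hIcc : Set.uIcc ε L = Set.Icc ε L := Set.uIcc_of_le hεL
  -- nonnegativity of η
  have hηnn : ∀ x ∈ Set.Icc ε L, 0 ≤ η ε x := by
    intro x hx
    rcases eq_or_lt_of_le hx.1 with h | h
    · rw [← h, (hbd ε hε).1]
    rcases eq_or_lt_of_le hx.2 with h2 | h2
    · rw [h2, hLdef, (hbd ε hε).2]
    · exact (hpos ε hε x ⟨h, h2⟩).le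
  -- the function v and its derivatives
  set vf : ℝ → ℝ := fun x => η ε x * Real.exp (-Q x) with hvfdef
  set vf' : ℝ → ℝ := fun x => (η' ε x - q x * η ε x) * Real.exp (-Q x) with hvf'def
  set vf'' : ℝ → ℝ := fun x =>
    (η'' ε x - 2 * q x * η' ε x + (q x ^ 2 - q' x) * η ε x) * Real.exp (-Q x) with hvf''def
  have hEd : ∀ x ∈ Set.Ioi (0:ℝ), HasDerivAt (fun y => Real.exp (-Q y))
      (-q x * Real.exp (-Q x)) x := by
    intro x hx
    have := ((hQd x hx).neg).exp
    convert this using 1 <;> first | rfl | (simp only [Pi.neg_apply]; ring)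
  have hvd : ∀ x ∈ Set.Icc ε L, HasDerivAt vf (vf' x) x := by
    intro x hx
    have := (hη' ε hε x hx).mul (hEd x (hsub hx))
    convert this using 1 <;> first | rfl | ring
  have hv'd : ∀ x ∈ Set.Icc ε L, HasDerivAt vf' (vf'' x) x := by
    intro x hx
    have hx0 := hsub hx
    have h1 : HasDerivAt (fun y => η' ε y - q y * η ε y)
        (η'' ε x - (q' x * η ε x + q x * η' ε x)) x :=
      (hη'' ε hε x hx).sub ((hq x hx0).mul (hη' ε hε x hx))
    have := h1.mul (hEd x hx0)
    convert this using 1 <;> first | rfl | ring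
  -- continuity facts on the interval
  have hηcont : ContinuousOn (η ε) (Set.Icc ε L) := fun x hx =>
    (hη' ε hε x hx).continuousAt.continuousWithinAt
  have hη'contI : ContinuousOn (η' ε) (Set.Icc ε L) := fun x hx =>
    (hη'' ε hε x hx).continuousAt.continuousWithinAt
  have hEcont : ContinuousOn (fun y => Real.exp (-Q y)) (Set.Icc ε L) :=
    Real.continuous_exp.comp_continuousOn (hQcont.mono hsub).neg
  have hqI : ContinuousOn q (Set.Icc ε L) := hqcont.mono hsub
  have hq'I : ContinuousOn q' (Set.Icc ε L) := hq'cont.mono hsub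
  have hvcont : ContinuousOn vf (Set.Icc ε L) := hηcont.mul hEcont
  have hv'cont : ContinuousOn vf' (Set.Icc ε L) :=
    (hη'contI.sub (hqI.mul hηcont)).mul hEcont
  have hv''cont : ContinuousOn vf'' (Set.Icc ε L) := by
    apply ContinuousOn.mul _ hEcont
    exact ((hη''cont ε hε).sub ((continuousOn_const.mul hqI).mul hη'contI)).add
      (((hqI.pow 2).sub hq'I).mul hηcont)
  have hWcont : ContinuousOn W (Set.Icc ε L) := by
    apply ContinuousOn.congr ((hqI.pow 2).sub hq'I)
    intro x hx; exact hWdef x (hsub hx)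
  -- integrability helper
  have hInt : ∀ f : ℝ → ℝ, ContinuousOn f (Set.Icc ε L) → ∀ u v : ℝ, ε ≤ u → u ≤ v → v ≤ L →
      IntervalIntegrable f volume u v := by
    intro f hf u v hu huv hv
    refine ContinuousOn.intervalIntegrable ?_
    rw [Set.uIcc_of_le huv]
    exact hf.mono (Set.Icc_subset_Icc hu hv)
  -- ODE for v
  have hODE : ∀ x ∈ Set.Icc ε L, vf'' x = (W x - 2 * lam ε) * vf x := by
    intro x hx
    have h1 := hode ε hε x hx
    have h2 := hWdef x (hsub hx)
    simp only [hvf''def, hvfdef]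
    linear_combination (2 * Real.exp (-Q x)) * h1 - (η ε x * Real.exp (-Q x)) * h2
  have hvε : vf ε = 0 := by simp [hvfdef, (hbd ε hε).1]
  have hvL : vf L = 0 := by
    simp only [hvfdef]; rw [hLdef, (hbd ε hε).2, zero_mul]
  -- normalization in terms of v
  have hnormv : (∫ x in ε..L, vf x ^ 2) = 1 := by
    rw [← hnorm ε hε]
    apply intervalIntegral.integral_congr
    intro x hx
    have h3 : Real.exp (-Q x) ^ 2 = Real.exp (-2 * Q x) := by
      rw [sq, ← Real.exp_add]; congr 1; ring
    simp only [hvfdef, mul_pow, h3]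
  -- integration by parts
  have hIBP : (∫ x in ε..L, (vf' x ^ 2 + vf x * vf'' x)) = 0 := by
    have hderiv : ∀ x ∈ Set.uIcc ε L, HasDerivAt (fun y => vf y * vf' y)
        (vf' x ^ 2 + vf x * vf'' x) x := by
      intro x hx; rw [hIcc] at hx
      have := (hvd x hx).mul (hv'd x hx)
      convert this using 1 <;> first | rfl | ring
    have hint : IntervalIntegrable (fun x => vf' x ^ 2 + vf x * vf'' x) volume ε L :=
      hInt _ (((hv'cont.pow 2)).add (hvcont.mul hv''cont)) ε L le_rfl hεL le_rfl
    rw [intervalIntegral.integral_eq_sub_of_hasDerivAt hderiv hint, hvε, hvL]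
    ring
  have hintD : IntervalIntegrable (fun x => vf' x ^ 2) volume ε L :=
    hInt _ (hv'cont.pow 2) ε L le_rfl hεL le_rfl
  have hintVV : IntervalIntegrable (fun x => vf x * vf'' x) volume ε L :=
    hInt _ (hvcont.mul hv''cont) ε L le_rfl hεL le_rfl
  set D : ℝ := ∫ x in ε..L, vf' x ^ 2 with hDdef
  have hD0 : 0 ≤ D := by
    apply intervalIntegral.integral_nonneg hεL
    intro x _; positivity
  have hsplit : D + (∫ x in ε..L, vf x * vf'' x) = 0 := by
    rw [hDdef, ← intervalIntegral.integral_add hintD hintVV]; exact hIBP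
  have hVV : (∫ x in ε..L, vf x * vf'' x) = (∫ x in ε..L, (W x - 2 * lam ε) * vf x ^ 2) := by
    apply intervalIntegral.integral_congr
    intro x hx; rw [hIcc] at hx
    show vf x * vf'' x = (W x - 2 * lam ε) * vf x ^ 2
    rw [hODE x hx]; ring
  -- the weighted integral
  have hintW : IntervalIntegrable (fun x => (W x + C) * vf x ^ 2) volume ε L :=
    hInt _ ((hWcont.add continuousOn_const).mul (hvcont.pow 2)) ε L le_rfl hεL le_rfl
  have hintV2 : IntervalIntegrable (fun x => vf x ^ 2) volume ε L :=
    hInt _ (hvcont.pow 2) ε L le_rfl hεL le_rfl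
  have hWval : (∫ x in ε..L, (W x + C) * vf x ^ 2) = 2 * lam ε + C - D := by
    have h1 : ∀ x, (W x + C) * vf x ^ 2
        = (W x - 2 * lam ε) * vf x ^ 2 + (2 * lam ε + C) * vf x ^ 2 := by intro x; ring
    have hintWl : IntervalIntegrable (fun x => (W x - 2 * lam ε) * vf x ^ 2) volume ε L :=
      hInt _ ((hWcont.sub continuousOn_const).mul (hvcont.pow 2)) ε L le_rfl hεL le_rfl
    calc (∫ x in ε..L, (W x + C) * vf x ^ 2)
        = ∫ x in ε..L, ((W x - 2 * lam ε) * vf x ^ 2 + (2 * lam ε + C) * vf x ^ 2) := by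
          simp only [h1]
      _ = (∫ x in ε..L, (W x - 2 * lam ε) * vf x ^ 2)
          + ∫ x in ε..L, (2 * lam ε + C) * vf x ^ 2 := by
          exact intervalIntegral.integral_add hintWl (hintV2.const_mul _)
      _ = (∫ x in ε..L, (W x - 2 * lam ε) * vf x ^ 2) + (2 * lam ε + C) := by
          rw [intervalIntegral.integral_const_mul, hnormv, mul_one]
      _ = 2 * lam ε + C - D := by rw [← hVV]; linarith
  have hWnn : 0 ≤ (∫ x in ε..L, (W x + C) * vf x ^ 2) := by
    apply intervalIntegral.integral_nonneg hεL
    intro x hx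
    have := hWlb x (hsub hx)
    have h2 : (0:ℝ) ≤ vf x ^ 2 := sq_nonneg _
    exact mul_nonneg (by linarith) h2
  have hlamΛ := hlam ε hε
  have hDK : D ≤ K' := by
    have : 2 * lam ε + C ≤ K' := le_trans (by linarith) (le_max_left _ _)
    linarith
  have hWK : (∫ x in ε..L, (W x + C) * vf x ^ 2) ≤ K' := by
    have : 2 * lam ε + C ≤ K' := le_trans (by linarith) (le_max_left _ _)
    linarith
  -- pointwise bound on vf^2
  have hsup : ∀ x ∈ Set.Icc ε L, vf x ^ 2 ≤ S2 := by
    intro x hx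
    have hIccx : Set.uIcc ε x = Set.Icc ε x := Set.uIcc_of_le hx.1
    have hsubx : Set.Icc ε x ⊆ Set.Icc ε L := Set.Icc_subset_Icc le_rfl hx.2
    have hfund : (∫ t in ε..x, 2 * vf t * vf' t) = vf x ^ 2 := by
      have hderiv : ∀ t ∈ Set.uIcc ε x, HasDerivAt (fun y => vf y ^ 2)
          (2 * vf t * vf' t) t := by
        intro t ht; rw [hIccx] at ht
        have := (hvd t (hsubx ht)).pow 2
        convert this using 1 <;> first | rfl | ring
      have hint : IntervalIntegrable (fun t => 2 * vf t * vf' t) volume ε x :=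
        hInt _ ((continuousOn_const.mul hvcont).mul hv'cont) ε x le_rfl hx.1 hx.2
      rw [intervalIntegral.integral_eq_sub_of_hasDerivAt hderiv hint, hvε]
      ring
    have hintSum : IntervalIntegrable (fun t => s * vf t ^ 2 + (1/s) * vf' t ^ 2) volume ε L :=
      hInt _ (((hvcont.pow 2).const_smul s).add ((hv'cont.pow 2).const_smul (1/s))) ε L
        le_rfl hεL le_rfl
    have h1 : (∫ t in ε..x, 2 * vf t * vf' t)
        ≤ ∫ t in ε..x, (s * vf t ^ 2 + (1/s) * vf' t ^ 2) := by
      apply intervalIntegral.integral_mono_on hx.1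
        (hInt _ ((continuousOn_const.mul hvcont).mul hv'cont) ε x le_rfl hx.1 hx.2)
        (hInt _ (((hvcont.pow 2).const_smul s).add ((hv'cont.pow 2).const_smul (1/s)))
          ε x le_rfl hx.1 hx.2)
      intro t ht
      have h := div_nonneg (sq_nonneg (s * vf t - vf' t)) hs0.le
      have hexp : (s * vf t - vf' t)^2 / s
          = s * vf t ^ 2 - 2 * vf t * vf' t + (1/s) * vf' t ^ 2 := by
        field_simp; ring
      rw [hexp] at h
      show 2 * vf t * vf' t ≤ s * vf t ^ 2 + (1/s) * vf' t ^ 2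
      linarith
    have h2 : (∫ t in ε..x, (s * vf t ^ 2 + (1/s) * vf' t ^ 2))
        ≤ ∫ t in ε..L, (s * vf t ^ 2 + (1/s) * vf' t ^ 2) := by
      apply intervalIntegral.integral_mono_interval le_rfl hx.1 hx.2 ?_ hintSum
      filter_upwards with t
      exact add_nonneg (mul_nonneg hs0.le (sq_nonneg _))
        (mul_nonneg (one_div_nonneg.2 hs0.le) (sq_nonneg _))
    have h3 : (∫ t in ε..L, (s * vf t ^ 2 + (1/s) * vf' t ^ 2)) = s + (1/s) * D := by
      rw [intervalIntegral.integral_add ((hintV2.const_mul s)) (hintD.const_mul (1/s)),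
        intervalIntegral.integral_const_mul, intervalIntegral.integral_const_mul,
        hnormv, mul_one, hDdef]
    have h4 : s + (1/s) * D ≤ S2 := by
      have : (1/s) * D ≤ (1/s) * K' := by
        apply mul_le_mul_of_nonneg_left hDK (by positivity)
      have hKs : (1/s) * K' = s := by
        rw [← hs2]; field_simp
      rw [hS2def]; linarith
    linarith
  -- the clamped interval
  set a' : ℝ := max a ε with ha'def
  set b' : ℝ := min b L with hb'def
  have ha'ε : ε ≤ a' := le_max_right _ _
  have ha'a : a ≤ a' := le_max_left _ _
  have ha'h : a' ≤ 1/2 := max_le hahalf hεh.le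
  have hb'2 : (2:ℝ) ≤ b' := le_min hb2 hL2.le
  have hb'L : b' ≤ L := min_le_right _ _
  have hb'b : b' ≤ b := min_le_left _ _
  have ha'b' : a' ≤ b' := by linarith
  have ha'L : a' ≤ L := by linarith
  have hεb' : ε ≤ b' := by linarith
  -- left mass bound
  have hleft : (∫ x in ε..a', vf x ^ 2) ≤ 1/8 := by
    have h1 : (∫ x in ε..a', vf x ^ 2) ≤ ∫ x in ε..a', S2 := by
      apply intervalIntegral.integral_mono_on ha'ε
        (hInt _ (hvcont.pow 2) ε a' le_rfl ha'ε ha'L) intervalIntegrable_const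
      intro t ht
      exact hsup t ⟨ht.1, le_trans ht.2 ha'L⟩
    rw [intervalIntegral.integral_const, smul_eq_mul] at h1
    have h2 : a' - ε ≤ a := by
      have : a' ≤ a + ε := max_le (le_add_of_nonneg_right hε0.le) (le_add_of_nonneg_left ha0.le)
      linarith
    have h3 : (a' - ε) * S2 ≤ a * S2 := mul_le_mul_of_nonneg_right h2 hS20.le
    rw [haS] at h3
    linarith
  -- right mass bound
  have hright : (∫ x in b'..L, vf x ^ 2) ≤ 1/8 := by
    rcases le_or_gt b L with hbL | hbL
    · have hb'eq : b' = b := min_eq_left hbL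
      have h1 : (∫ x in b'..L, vf x ^ 2)
          ≤ ∫ x in b'..L, (1/(8*K')) * ((W x + C) * vf x ^ 2) := by
        apply intervalIntegral.integral_mono_on hb'L
          (hInt _ (hvcont.pow 2) b' L hεb' hb'L le_rfl)
          (hInt _ (continuousOn_const.mul ((hWcont.add continuousOn_const).mul (hvcont.pow 2)))
            b' L hεb' hb'L le_rfl)
        intro t ht
        have hWt : 8*K' - C ≤ W t := hbW t (hb'eq ▸ ht.1)
        have hv2 : (0:ℝ) ≤ vf t ^ 2 := sq_nonneg _
        show vf t ^ 2 ≤ (1/(8*K')) * ((W t + C) * vf t ^ 2)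
        rw [show (1/(8*K')) * ((W t + C) * vf t ^ 2) = ((W t + C) * vf t ^ 2) / (8*K') by ring,
          le_div_iff₀ (by positivity)]
        calc vf t ^ 2 * (8*K') ≤ vf t ^ 2 * (W t + C) :=
              mul_le_mul_of_nonneg_left (by linarith) hv2
          _ = (W t + C) * vf t ^ 2 := mul_comm _ _
      have h2 : (∫ x in b'..L, (1/(8*K')) * ((W x + C) * vf x ^ 2))
          = (1/(8*K')) * ∫ x in b'..L, (W x + C) * vf x ^ 2 :=
        intervalIntegral.integral_const_mul _ _
      have h3 : (∫ x in b'..L, (W x + C) * vf x ^ 2) ≤ ∫ x in ε..L, (W x + C) * vf x ^ 2 := by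
        apply intervalIntegral.integral_mono_interval hεb' hb'L le_rfl ?_ hintW
        refine Filter.eventually_of_mem (self_mem_ae_restrict measurableSet_Ioc) ?_
        intro t ht
        have hW := hWlb t (lt_trans hε0 ht.1)
        exact mul_nonneg (by linarith) (sq_nonneg _)
      rw [h2] at h1
      have h4 : (1/(8*K')) * (∫ x in b'..L, (W x + C) * vf x ^ 2) ≤ (1/(8*K')) * K' :=
        mul_le_mul_of_nonneg_left (le_trans h3 hWK) (by positivity)
      have h5 : (1/(8*K')) * K' = 1/8 := by field_simp
      linarith
    · rw [hb'def, min_eq_right hbL.le, intervalIntegral.integral_same]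
      norm_num
  -- middle mass
  have hintV2' : ∀ u v : ℝ, ε ≤ u → u ≤ v → v ≤ L →
      IntervalIntegrable (fun x => vf x ^ 2) volume u v :=
    fun u v hu huv hv => hInt _ (hvcont.pow 2) u v hu huv hv
  have hsplit1 : (∫ x in ε..a', vf x ^ 2) + (∫ x in a'..L, vf x ^ 2) = 1 := by
    rw [intervalIntegral.integral_add_adjacent_intervals
      (hintV2' ε a' le_rfl ha'ε ha'L) (hintV2' a' L ha'ε ha'L le_rfl)]
    exact hnormv
  have hsplit2 : (∫ x in a'..b', vf x ^ 2) + (∫ x in b'..L, vf x ^ 2)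
      = ∫ x in a'..L, vf x ^ 2 :=
    intervalIntegral.integral_add_adjacent_intervals
      (hintV2' a' b' ha'ε ha'b' hb'L) (hintV2' b' L hεb' hb'L le_rfl)
  have hmid : 3/4 ≤ ∫ x in a'..b', vf x ^ 2 := by linarith
  -- pointwise comparison on [a', b']
  have hE2cont : ContinuousOn (fun x => Real.exp (-2 * Q x)) (Set.Icc ε L) :=
    Real.continuous_exp.comp_continuousOn (continuousOn_const.mul (hQcont.mono hsub))
  have hη2cont : ContinuousOn (fun x => η ε x * Real.exp (-2 * Q x)) (Set.Icc ε L) :=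
    hηcont.mul hE2cont
  have hptw : ∀ x ∈ Set.Icc a' b',
      (c / Real.sqrt S2) * vf x ^ 2 ≤ η ε x * Real.exp (-2 * Q x) := by
    intro x hx
    have hxI : x ∈ Set.Icc ε L := ⟨le_trans ha'ε hx.1, le_trans hx.2 hb'L⟩
    have hxab : x ∈ Set.Icc a b := ⟨le_trans ha'a hx.1, le_trans hx.2 hb'b⟩
    have hvnn : 0 ≤ vf x := mul_nonneg (hηnn x hxI) (Real.exp_pos _).le
    have hvle : vf x ≤ Real.sqrt S2 :=
      (Real.le_sqrt hvnn hS20.le).2 (hsup x hxI)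
    have hcx : c ≤ Real.exp (-Q x) := hcmin x hxab
    have h6 : (c / Real.sqrt S2) * vf x ^ 2 ≤ c * vf x := by
      rw [div_mul_eq_mul_div, div_le_iff₀ hsS2]
      calc c * vf x ^ 2 = (c * vf x) * vf x := by ring
        _ ≤ (c * vf x) * Real.sqrt S2 :=
            mul_le_mul_of_nonneg_left hvle (mul_nonneg hc0.le hvnn)
        _ = c * vf x * Real.sqrt S2 := by ring
    have h7 : c * vf x ≤ vf x * Real.exp (-Q x) := by
      rw [mul_comm]
      exact mul_le_mul_of_nonneg_left hcx hvnn
    have h8 : η ε x * Real.exp (-2 * Q x) = vf x * Real.exp (-Q x) := by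
      have hexp2 : Real.exp (-2 * Q x) = Real.exp (-Q x) * Real.exp (-Q x) := by
        rw [← Real.exp_add]; congr 1; ring
      rw [hexp2, hvfdef]; ring
    rw [h8]; linarith
  -- conclusion
  have hfinal1 : (c / Real.sqrt S2) * (∫ x in a'..b', vf x ^ 2)
      ≤ ∫ x in a'..b', η ε x * Real.exp (-2 * Q x) := by
    rw [← intervalIntegral.integral_const_mul]
    exact intervalIntegral.integral_mono_on ha'b'
      ((hintV2' a' b' ha'ε ha'b' hb'L).const_mul _)
      (hInt _ hη2cont a' b' ha'ε ha'b' hb'L) hptw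
  have hfinal2 : (∫ x in a'..b', η ε x * Real.exp (-2 * Q x))
      ≤ ∫ x in ε..L, η ε x * Real.exp (-2 * Q x) := by
    apply intervalIntegral.integral_mono_interval ha'ε ha'b' hb'L ?_
      (hInt _ hη2cont ε L le_rfl hεL le_rfl)
    refine Filter.eventually_of_mem (self_mem_ae_restrict measurableSet_Ioc) ?_
    intro t ht
    exact mul_nonneg (hηnn t ⟨ht.1.le, ht.2⟩) (Real.exp_pos _).le
  have hB34 : c / (2 * Real.sqrt S2) ≤ (c / Real.sqrt S2) * (3/4) := by
    have he : c / (2 * Real.sqrt S2) = (c / Real.sqrt S2) * (1/2) := by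
      field_simp
    rw [he]
    apply mul_le_mul_of_nonneg_left (by norm_num) (by positivity)
  have hmul : (c / Real.sqrt S2) * (3/4) ≤ (c / Real.sqrt S2) * (∫ x in a'..b', vf x ^ 2) :=
    mul_le_mul_of_nonneg_left hmid (by positivity)
  linarith
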